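/- Let (x₀,y₀) ∈ ℚ̄² be a periodic point of g, i.e. g^n(x₀,y₀) = (x₀,y₀) for some n ≥ 1. Then x₀ and y₀ are integral over ℤ. -/

import Mathlib

/-- A fixed algebraic closure of `ℚ`. -/
noncomputable def Qbar : Type := AlgebraicClosure ℚ

noncomputable instance : Field Qbar := inferInstanceAs (Field (AlgebraicClosure ℚ))
noncomputable instance : Algebra ℚ Qbar := inferInstanceAs (Algebra ℚ (AlgebraicClosure ℚ))
instance : CharZero Qbar := inferInstanceAs (CharZero (AlgebraicClosure ℚ))
instance : Algebra.IsAlgebraic ℚ Qbar :=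
  AlgebraicClosure.isAlgebraic ℚ

/-- The Hénon map `g(x,y) = (y, x + y - y³)` on `ℚ̄²`. -/
noncomputable def gA (P : Qbar × Qbar) : Qbar × Qbar :=
  (P.2, P.1 + P.2 - P.2 ^ 3)


open IsDedekindDomain UniqueFactorizationMonoid

/-- In a Dedekind domain, if `s ∤ a` then some prime power divides `(s)` but not `(a)`. -/
lemma exists_pow_dvd_not_dvd {R : Type*} [CommRing R] [IsDomain R] [IsDedekindDomain R]
    {a s : R} (hs : s ≠ 0) (h : ¬ s ∣ a) :
    ∃ (v : HeightOneSpectrum R) (m : ℕ),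
      v.asIdeal ^ m ∣ Ideal.span {s} ∧ ¬ v.asIdeal ^ m ∣ Ideal.span {a} := by
  classical
  have ha : a ≠ 0 := by rintro rfl; exact h (dvd_zero s)
  have hsI : Ideal.span {s} ≠ ⊥ := by simpa [Ideal.span_singleton_eq_bot] using hs
  have haI : Ideal.span {a} ≠ ⊥ := by simpa [Ideal.span_singleton_eq_bot] using ha
  have hdvd : ¬ Ideal.span {s} ∣ Ideal.span {a} := by
    intro hd
    exact h (Ideal.mem_span_singleton.mp
      (Ideal.le_of_dvd hd (Ideal.mem_span_singleton.mpr dvd_rfl)))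
  rw [dvd_iff_normalizedFactors_le_normalizedFactors hsI haI, Multiset.le_iff_count] at hdvd
  push_neg at hdvd
  obtain ⟨P, hP⟩ := hdvd
  have hPmem : P ∈ normalizedFactors (Ideal.span {s}) := by
    rw [← Multiset.count_pos]; omega
  have hPprime : Prime P := prime_of_normalized_factor P hPmem
  have hPbot : P ≠ ⊥ := by
    intro hbot
    have h0 := dvd_of_mem_normalizedFactors hPmem
    rw [hbot, ← Ideal.zero_eq_bot, zero_dvd_iff, Ideal.zero_eq_bot] at h0
    exact hsI h0
  refine ⟨⟨P, Ideal.isPrime_of_prime hPprime, hPbot⟩,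
    Multiset.count P (normalizedFactors (Ideal.span {s})), ?_, ?_⟩
  · apply pow_dvd_of_le_emultiplicity
    rw [emultiplicity_eq_count_normalizedFactors hPprime.irreducible hsI, normalize_eq]
  · rw [← emultiplicity_lt_iff_not_dvd]
    rw [emultiplicity_eq_count_normalizedFactors hPprime.irreducible haI, normalize_eq]
    exact_mod_cast hP

open NumberField in
/-- An element of a number field whose `v`-adic valuation is at most one for every
finite place is integral over `ℤ`. -/
lemma isIntegral_of_forall_val_le {K : Type*} [Field K] [NumberField K] (x : K)
    (h : ∀ v : HeightOneSpectrum (𝓞 K), v.valuation K x ≤ 1) : IsIntegral ℤ x := by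
  obtain ⟨⟨a, s⟩, rfl⟩ := IsLocalization.mk'_surjective (nonZeroDivisors (𝓞 K)) x
  have hs0 : (s : 𝓞 K) ≠ 0 := nonZeroDivisors.coe_ne_zero s
  have hdvd : (s : 𝓞 K) ∣ a := by
    by_contra hnd
    obtain ⟨v, m, hvs, hva⟩ := exists_pow_dvd_not_dvd hs0 hnd
    have hval := h v
    rw [v.valuation_of_mk'] at hval
    have hs1 : v.intValuation s ≤ WithZero.exp (-(m : ℤ)) :=
      (v.intValuation_le_pow_iff_dvd _ _).mpr hvs
    have hsne : v.intValuation s ≠ 0 := by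
      simpa [IsDedekindDomain.HeightOneSpectrum.intValuation_apply] using
        v.intValuation_ne_zero _ hs0
    have ha1 : v.intValuation a ≤ v.intValuation s := by
      rwa [div_le_one₀ (lt_of_le_of_ne bot_le (Ne.symm hsne))] at hval
    exact hva ((v.intValuation_le_pow_iff_dvd _ _).mp (ha1.trans hs1))
  obtain ⟨c, rfl⟩ := hdvd
  dsimp only
  rw [IsLocalization.mk'_mul_cancel_left]
  exact RingOfIntegers.isIntegral_coe c


/-- The coordinates of any `g`-periodic point of `ℚ̄²` are integral over `ℤ`. -/
theorem stmt4 (P : Qbar × Qbar) (hP : ∃ n, 1 ≤ n ∧ gA^[n] P = P) :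
    IsIntegral ℤ P.1 ∧ IsIntegral ℤ P.2 := by
  classical
  obtain ⟨n, hn, hper⟩ := hP
  set y : ℕ → Qbar := fun i => (gA^[i] P).2 with hy
  have hiter : ∀ i, gA^[i + n] P = gA^[i] P := fun i => by
    rw [Function.iterate_add_apply, hper]
  have hyper : ∀ i, y (i + n) = y i := fun i => by simp only [hy, hiter]
  have hx : ∀ i, (gA^[i] P).1 = y (i + n - 1) := by
    intro i
    have h1 : i + n = (i + n - 1) + 1 := by omega
    calc (gA^[i] P).1 = (gA^[i + n] P).1 := by rw [hiter]
      _ = (gA^[(i + n - 1) + 1] P).1 := by rw [← h1]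
      _ = y (i + n - 1) := by rw [Function.iterate_succ_apply']; rfl
  have hrec : ∀ i, y (i + 1) = y (i + n - 1) + y i - (y i) ^ 3 := by
    intro i
    have h2 : y (i + 1) = (gA (gA^[i] P)).2 := by
      rw [hy]; simp only [Function.iterate_succ_apply']
    rw [h2, gA]
    simp only [← hx i]
    rfl
  have hmul : ∀ k r, y (r + n * k) = y r := by
    intro k
    induction k with
    | zero => intro r; simp
    | succ k ih =>
      intro r
      have : r + n * (k + 1) = (r + n * k) + n := by ring
      rw [this, hyper, ih]
  have hymod : ∀ i, y i = y (i % n) := by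
    intro i
    conv_lhs => rw [show i = i % n + n * (i / n) from (Nat.mod_add_div i n).symm]
    exact hmul _ _
  -- the number field generated by the orbit
  set K : IntermediateField ℚ Qbar :=
    IntermediateField.adjoin ℚ (Set.range fun j : Fin n => y j) with hK
  haveI : FiniteDimensional ℚ K := by
    apply IntermediateField.finiteDimensional_adjoin
    rintro x ⟨j, rfl⟩
    exact (Algebra.IsAlgebraic.isAlgebraic _).isIntegral
  haveI : NumberField K := { to_charZero := inferInstance, to_finiteDimensional := inferInstance }
  have hyK : ∀ i, y i ∈ K := by
    intro i
    rw [hymod i]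
    exact IntermediateField.subset_adjoin _ _ ⟨⟨i % n, Nat.mod_lt _ (by omega)⟩, rfl⟩
  set z : ℕ → K := fun i => ⟨y i, hyK i⟩ with hz
  have hzmod : ∀ i, z i = z (i % n) := fun i => Subtype.ext (hymod i)
  have hzrec : ∀ i, (z i) ^ 3 = z (i + n - 1) + z i - z (i + 1) := by
    intro i
    apply Subtype.ext
    push_cast [hz]
    rw [hrec i]; ring
  have key : ∀ i, IsIntegral ℤ (y i) := by
    intro i
    have hint : IsIntegral ℤ (z i) := by
      apply isIntegral_of_forall_val_le
      intro v
      by_contra hv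
      push_neg at hv
      have hne : (Finset.range n).Nonempty := ⟨0, Finset.mem_range.mpr (by omega)⟩
      set M := (Finset.range n).sup' hne (fun j => v.valuation K (z j : K)) with hM
      have hle : ∀ j, v.valuation K (z j) ≤ M := by
        intro j
        rw [hzmod j]
        exact Finset.le_sup' (fun j => v.valuation K (z j : K)) (Finset.mem_range.mpr (Nat.mod_lt _ (Nat.lt_of_lt_of_le Nat.zero_lt_one hn)))
      obtain ⟨i0, _, hi0⟩ := Finset.exists_mem_eq_sup' hne (fun j => v.valuation K (z j : K))
      have hM1 : (1 : WithZero (Multiplicative ℤ)) < M := lt_of_lt_of_le hv (hle i)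
      have hle3 : M ^ 3 ≤ M := by
        calc M ^ 3 = v.valuation K ((z i0) ^ 3) := by rw [map_pow, ← hi0]
          _ = v.valuation K (z (i0 + n - 1) + z i0 - z (i0 + 1)) := by rw [hzrec i0]
          _ ≤ max (max (v.valuation K (z (i0 + n - 1))) (v.valuation K (z i0)))
                (v.valuation K (z (i0 + 1))) := by
              refine le_trans (Valuation.map_sub _ _ _) ?_
              exact max_le_max (Valuation.map_add _ _ _) le_rfl
          _ ≤ M := max_le (max_le (hle _) (hle _)) (hle _)
      have hlt : M ^ 1 < M ^ 3 := pow_lt_pow_right₀ hM1 (by omega)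
      rw [pow_one] at hlt
      exact absurd hle3 (not_le.mpr hlt)
    have hmap := hint.map ((algebraMap (↥K) Qbar).toIntAlgHom)
    simpa using hmap
  refine ⟨?_, key 0⟩
  have h0 : P.1 = y (n - 1) := by
    have := hx 0
    simpa using this
  rw [h0]; exact key _
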